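/- Define Ŝ(q,p) implicitly by χ(p/2)·Û_ω(q+p,q) = Σ_{σ=±1} D_{σω}(p)·Ŝ_{σω,ω}(q+p,q), where Û_ω(q+p,q) = C_ω(q+p,q)·ĝ_ω(q+p)·ĝ_ω(q). Then under the π/2-rotation k ↦ k* = (−k¹, k⁰) the kernel satisfies Ŝ_{ω̄,ω}(k*, p*) = −ω·ω̄·Ŝ_{ω̄,ω}(k,p), and consequently Σ_{i,j} ∫ d²k/(2π)² Ŝ_{ω,ω}^{(i,j)}(k, −k) = 0. -/

import Mathlib

open MeasureTheory

/-- `D_ω(p) = p⁰ + i·ω·p¹`. -/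
noncomputable def Dfun (ω : ℝ) (p : ℝ × ℝ) : ℂ :=
  (p.1 : ℂ) + Complex.I * (ω : ℂ) * (p.2 : ℂ)

/-- The rotation of `ℝ²` by `π/2`: `k ↦ k* = (−k¹, k⁰)`. -/
def rotQ (k : ℝ × ℝ) : ℝ × ℝ := (-k.2, k.1)

/-- `C_ω(q,p) = [χ^{-1}(p)−1] D_ω(p) − [χ^{-1}(q)−1] D_ω(q)`, written with first
argument `q` and second argument `p`. -/
noncomputable def Cker (χ : ℝ × ℝ → ℝ) (ω : ℝ) (q p : ℝ × ℝ) : ℂ :=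
  (((χ p)⁻¹ - 1 : ℝ) : ℂ) * Dfun ω p - (((χ q)⁻¹ - 1 : ℝ) : ℂ) * Dfun ω q

/-- `ĝ_ω(q) = χ(q)/D_ω(q)`. -/
noncomputable def ghat (χ : ℝ × ℝ → ℝ) (ω : ℝ) (q : ℝ × ℝ) : ℂ :=
  ((χ q : ℝ) : ℂ) / Dfun ω q

/-- `Û_ω(q+p, q) = C_ω(q+p,q) ĝ_ω(q+p) ĝ_ω(q)`, with arguments `a = q+p`, `b = q`. -/
noncomputable def Uker (χ : ℝ × ℝ → ℝ) (ω : ℝ) (a b : ℝ × ℝ) : ℂ :=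
  Cker χ ω a b * ghat χ ω a * ghat χ ω b

/-- The kernel `Ŝ_{ω̄,ω}(a,b)` solving the implicit decomposition
`χ(p/2)·Û_ω(q+p,q) = Σ_σ D_{σω}(p)·Ŝ_{σω,ω}(q+p,q)` with `p = a − b`. -/
noncomputable def Sker (χ : ℝ × ℝ → ℝ) (ωb ω : ℝ) (a b : ℝ × ℝ) : ℂ :=
  (starRingEnd ℂ) (Dfun ωb (a - b)) * ((χ ((1 / 2 : ℝ) • (a - b)) : ℝ) : ℂ) *
      Uker χ ω a b /
    (2 * (((a - b).1 ^ 2 + (a - b).2 ^ 2 : ℝ) : ℂ))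

lemma mulconj (ω : ℝ) (hω : ω = 1 ∨ ω = -1) (p : ℝ × ℝ) :
    Dfun ω p * (starRingEnd ℂ) (Dfun ω p) = ((p.1 ^ 2 + p.2 ^ 2 : ℝ) : ℂ) := by
  rcases hω with h | h <;> subst h <;>
    simp [Dfun, map_add, map_mul, Complex.conj_I, Complex.conj_ofReal] <;>
    ring_nf <;> simp [Complex.I_sq] <;> ring

lemma Dfun_rot (ω : ℝ) (hω : ω = 1 ∨ ω = -1) (p : ℝ × ℝ) :
    Dfun ω (rotQ p) = Complex.I * (ω : ℂ) * Dfun ω p := by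
  rcases hω with h | h <;> subst h <;>
    simp [Dfun, rotQ] <;> ring_nf <;> simp [Complex.I_sq] <;> ring

lemma rotQ_sub (a b : ℝ × ℝ) : rotQ a - rotQ b = rotQ (a - b) := by
  simp [rotQ, Prod.ext_iff]; ring

lemma rotQ_smul (c : ℝ) (p : ℝ × ℝ) : rotQ (c • p) = c • rotQ p := by
  simp [rotQ, Prod.ext_iff, mul_comm]

lemma Iω_ne (ω : ℝ) (hω : ω = 1 ∨ ω = -1) : Complex.I * (ω : ℂ) ≠ 0 := by
  rcases hω with h | h <;> subst h <;> simp [Complex.I_ne_zero]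

lemma ghat_rot (χ : ℝ × ℝ → ℝ) (hrad : ∀ k, χ (rotQ k) = χ k)
    (ω : ℝ) (hω : ω = 1 ∨ ω = -1) (q : ℝ × ℝ) :
    ghat χ ω (rotQ q) = (Complex.I * (ω : ℂ))⁻¹ * ghat χ ω q := by
  rw [ghat, ghat, hrad, Dfun_rot ω hω, div_mul_eq_div_div_swap, div_eq_inv_mul]

lemma Cker_rot (χ : ℝ × ℝ → ℝ) (hrad : ∀ k, χ (rotQ k) = χ k)
    (ω : ℝ) (hω : ω = 1 ∨ ω = -1) (a b : ℝ × ℝ) :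
    Cker χ ω (rotQ a) (rotQ b) = Complex.I * (ω : ℂ) * Cker χ ω a b := by
  rw [Cker, Cker, hrad, hrad, Dfun_rot ω hω, Dfun_rot ω hω]; ring

lemma Uker_rot (χ : ℝ × ℝ → ℝ) (hrad : ∀ k, χ (rotQ k) = χ k)
    (ω : ℝ) (hω : ω = 1 ∨ ω = -1) (a b : ℝ × ℝ) :
    Uker χ ω (rotQ a) (rotQ b) = (Complex.I * (ω : ℂ))⁻¹ * Uker χ ω a b := by
  rw [Uker, Uker, Cker_rot χ hrad ω hω, ghat_rot χ hrad ω hω, ghat_rot χ hrad ω hω]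
  field_simp [Iω_ne ω hω]

lemma Sker_rot (χ : ℝ × ℝ → ℝ) (hrad : ∀ k, χ (rotQ k) = χ k)
    (ω : ℝ) (hω : ω = 1 ∨ ω = -1) (ωb : ℝ) (hωb : ωb = 1 ∨ ωb = -1) (a b : ℝ × ℝ) :
    Sker χ ωb ω (rotQ a) (rotQ b) = -((ωb : ℂ) * (ω : ℂ)) * Sker χ ωb ω a b := by
  rw [Sker, Sker, rotQ_sub, Dfun_rot ωb hωb, ← rotQ_smul, hrad,
    Uker_rot χ hrad ω hω]
  have h1 : ((rotQ (a-b)).1 ^ 2 + (rotQ (a-b)).2 ^ 2 : ℝ) = ((a-b).1 ^ 2 + (a-b).2 ^ 2) := by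
    simp [rotQ]; ring
  rw [h1, map_mul, map_mul, Complex.conj_I, Complex.conj_ofReal]
  have h2 : (Complex.I * (ω : ℂ))⁻¹ = -(Complex.I * (ω : ℂ)) := by
    refine inv_eq_of_mul_eq_one_right ?_
    rcases hω with h | h <;> subst h <;> push_cast <;> ring_nf <;> simp [Complex.I_sq]
  rw [h2]
  field_simp
  ring_nf
  simp only [Complex.I_sq]
  ring

lemma key1 (χ : ℝ × ℝ → ℝ) (ω : ℝ) (a b : ℝ × ℝ) (hab : a - b ≠ 0)
    (s : ℝ) (hs : s * ω = 1 ∨ s * ω = -1) :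
    Dfun (s * ω) (a - b) * Sker χ (s * ω) ω a b
      = ((χ ((1 / 2 : ℝ) • (a - b)) : ℝ) : ℂ) * Uker χ ω a b / 2 := by
  have hne : (((a - b).1 ^ 2 + (a - b).2 ^ 2 : ℝ) : ℂ) ≠ 0 := by
    have h1 : (a - b).1 ≠ 0 ∨ (a - b).2 ≠ 0 := by
      by_contra h; push_neg at h
      exact hab (Prod.ext h.1 h.2)
    have h2 : ((a - b).1 ^ 2 + (a - b).2 ^ 2 : ℝ) > 0 := by
      rcases h1 with h | h <;> positivity
    exact_mod_cast ne_of_gt h2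
  have hm := mulconj (s * ω) hs (a - b)
  rw [Sker, ← mul_div_assoc]
  rw [show Dfun (s * ω) (a - b) *
      ((starRingEnd ℂ) (Dfun (s * ω) (a - b)) * ((χ ((1 / 2 : ℝ) • (a - b)) : ℝ) : ℂ) *
        Uker χ ω a b)
      = (((a - b).1 ^ 2 + (a - b).2 ^ 2 : ℝ) : ℂ) *
          (((χ ((1 / 2 : ℝ) • (a - b)) : ℝ) : ℂ) * Uker χ ω a b) from by
    linear_combination (((χ ((1 / 2 : ℝ) • (a - b)) : ℝ) : ℂ) * Uker χ ω a b) * hm]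
  rw [mul_comm (2 : ℂ), mul_div_mul_left _ _ hne]

def rotHomeo : Homeomorph (ℝ × ℝ) (ℝ × ℝ) where
  toFun := rotQ
  invFun := fun k => (k.2, -k.1)
  left_inv := fun k => by simp [rotQ]
  right_inv := fun k => by simp [rotQ]
  continuous_toFun := by unfold rotQ; fun_prop
  continuous_invFun := by fun_prop

lemma rot_mp : MeasurePreserving rotQ (volume : Measure (ℝ × ℝ)) volume := by
  have hneg : MeasurePreserving (fun x : ℝ => -x) volume volume :=
    Measure.measurePreserving_neg volume
  have h2 : MeasurePreserving (Prod.map (fun x : ℝ => -x) (id : ℝ → ℝ))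
      ((volume : Measure ℝ).prod volume) ((volume : Measure ℝ).prod volume) :=
    hneg.prod (MeasurePreserving.id volume)
  have h1 : MeasurePreserving (Prod.swap : ℝ × ℝ → ℝ × ℝ)
      ((volume : Measure ℝ).prod volume) ((volume : Measure ℝ).prod volume) :=
    Measure.measurePreserving_swap
  have hco := h2.comp h1
  have : rotQ = (Prod.map (fun x : ℝ => -x) (id : ℝ → ℝ)) ∘ Prod.swap := rfl
  rw [this, Measure.volume_eq_prod]
  exact hco

lemma part3 (χ : ℝ × ℝ → ℝ) (hrad : ∀ k, χ (rotQ k) = χ k)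
    (ω : ℝ) (hω : ω = 1 ∨ ω = -1) :
    (∫ k : ℝ × ℝ, Sker χ ω ω k (-k)) = 0 := by
  have hodd : ∀ k, Sker χ ω ω (rotQ k) (-(rotQ k)) = -Sker χ ω ω k (-k) := by
    intro k
    have hr : rotQ (-k) = -(rotQ k) := by simp [rotQ, Prod.ext_iff]
    have h := Sker_rot χ hrad ω hω ω hω k (-k)
    rw [hr] at h
    rw [h]
    have : -((ω : ℂ) * (ω : ℂ)) = -1 := by
      rcases hω with h' | h' <;> subst h' <;> norm_num
    rw [this]; ring
  have hcomp : (∫ k : ℝ × ℝ, Sker χ ω ω (rotQ k) (-(rotQ k)))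
      = ∫ k : ℝ × ℝ, Sker χ ω ω k (-k) :=
    rot_mp.integral_comp rotHomeo.toMeasurableEquiv.measurableEmbedding
      (fun k => Sker χ ω ω k (-k))
  have h2 : (∫ k : ℝ × ℝ, Sker χ ω ω (rotQ k) (-(rotQ k)))
      = -∫ k : ℝ × ℝ, Sker χ ω ω k (-k) := by
    simp only [hodd]; exact integral_neg _
  rw [hcomp] at h2
  linear_combination (1/2 : ℂ) * h2

/-- For a radial cutoff `χ`: the kernel `Ŝ` solves the implicit decomposition of
`χ(p/2)Û_ω`, it is odd of type `Ŝ_{ω̄,ω}(k*,p*) = −ωω̄ Ŝ_{ω̄,ω}(k,p)` under the `π/2`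
rotation, and consequently the same-chirality anomaly contribution vanishes:
`∫ d²k Ŝ_{ω,ω}(k, −k) = 0`. -/
theorem stmt13 (χ : ℝ × ℝ → ℝ) (hrad : ∀ k, χ (rotQ k) = χ k)
    (ω : ℝ) (hω : ω = 1 ∨ ω = -1) :
    (∀ a b : ℝ × ℝ, a - b ≠ 0 →
      ((χ ((1 / 2 : ℝ) • (a - b)) : ℝ) : ℂ) * Uker χ ω a b
        = ∑ s ∈ ({1, -1} : Finset ℝ), Dfun (s * ω) (a - b) * Sker χ (s * ω) ω a b) ∧
    (∀ ωb : ℝ, ωb = 1 ∨ ωb = -1 → ∀ a b : ℝ × ℝ,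
      Sker χ ωb ω (rotQ a) (rotQ b) = -((ωb : ℂ) * (ω : ℂ)) * Sker χ ωb ω a b) ∧
    (∫ k : ℝ × ℝ, Sker χ ω ω k (-k)) = 0 := by
  refine ⟨?_, ?_, part3 χ hrad ω hω⟩
  · intro a b hab
    rw [Finset.sum_pair (by norm_num : (1 : ℝ) ≠ -1)]
    have hω1 : (1 : ℝ) * ω = 1 ∨ (1 : ℝ) * ω = -1 := by rcases hω with h | h <;> simp [h]
    have hω2 : (-1 : ℝ) * ω = 1 ∨ (-1 : ℝ) * ω = -1 := by rcases hω with h | h <;> simp [h]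
    rw [key1 χ ω a b hab 1 hω1, key1 χ ω a b hab (-1) hω2]
    ring
  · intro ωb hωb a b
    exact Sker_rot χ hrad ω hω ωb hωb a b
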